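/- Let $X \subset \Sigma^{\mathbb{Z}}$ be a subshift over a finite alphabet $\Sigma$ with property $(D)$ (i.e., for every admissible word $b\sigma$ of $X$ there exists a word $a$ admissible to the left of $b$ such that every left-infinite extension of $ab$ can be followed by $\sigma$). Then the set $E(X) = \bigcap_{i\in\mathbb{Z}} \{x \in X : x_i \in \omega_1^+(x_{(-\infty,i)})\}$ is residual in $X$ (a dense $G_\delta$). -/

import Mathlib

open Set

/-- The shift map on bi-infinite sequences. -/
def shiftMap {A : Type*} (x : ℤ → A) : ℤ → A := fun i => x (i + 1)

/-- A subshift: a closed, shift-invariant subset of the full shift. -/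
def IsSubshift {A : Type*} [TopologicalSpace A] (X : Set (ℤ → A)) : Prop :=
  IsClosed X ∧ ∀ x, x ∈ X ↔ shiftMap x ∈ X

/-- Property (D): for every admissible word `bσ` (realized as `x_{(-m,0]}` together with
`x 1` for some `x ∈ X`) there is a left extension `a` (realized by a point `y ∈ X`
agreeing with `x` on `(-m,0]`, the word `ab` being `y_{(-k,0]}`) such that every
left-infinite past compatible with `ab` can be followed by `σ = x 1`. -/
def PropertyD {A : Type*} (X : Set (ℤ → A)) : Prop :=
  ∀ x ∈ X, ∀ m : ℕ, ∃ (k : ℕ) (y : ℤ → A), y ∈ X ∧ m ≤ k ∧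
    (∀ j : ℤ, -(m : ℤ) < j → j ≤ 0 → y j = x j) ∧
    (∀ z ∈ X, (∀ j : ℤ, -(k : ℤ) < j → j ≤ 0 → z j = y j) →
      ∃ z' ∈ X, (∀ i : ℤ, i ≤ 0 → z' i = z i) ∧ z' 1 = x 1)

/-- The set `E(X) = ⋂_{i ∈ ℤ} {x ∈ X : x i ∈ ω₁⁺(x_{(-∞,i)})}`, where
`x i ∈ ω₁⁺(x_{(-∞,i)})` means: there is `k` such that every point of `X` carrying the
word `x_{[i-k,i)}` (regardless of its more remote past) can be continued by the symbol
`x i` at position `i`. -/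
def ESet {A : Type*} (X : Set (ℤ → A)) : Set (ℤ → A) :=
  X ∩ ⋂ i : ℤ, {x | ∃ k : ℕ, ∀ y ∈ X,
    (∀ j : ℤ, i - (k : ℤ) ≤ j → j < i → y j = x j) →
    ∃ y' ∈ X, (∀ j : ℤ, j < i → y' j = y j) ∧ y' i = x i}

/-! ### Auxiliary material -/

/-- Shift by an arbitrary integer. -/
def shiftZ {A : Type*} (t : ℤ) (x : ℤ → A) : ℤ → A := fun i => x (i + t)

/-- The `i`-th piece whose intersection (within `X`) forms `ESet X`. -/
def Vpiece {A : Type*} (X : Set (ℤ → A)) (i : ℤ) : Set (ℤ → A) :=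
  {x | ∃ k : ℕ, ∀ y ∈ X,
    (∀ j : ℤ, i - (k : ℤ) ≤ j → j < i → y j = x j) →
    ∃ y' ∈ X, (∀ j : ℤ, j < i → y' j = y j) ∧ y' i = x i}

lemma ESet_eq {A : Type*} (X : Set (ℤ → A)) : ESet X = X ∩ ⋂ i : ℤ, Vpiece X i := rfl

lemma shiftZ_mem {A : Type*} [TopologicalSpace A] {X : Set (ℤ → A)} (hX : IsSubshift X)
    (t : ℤ) {x : ℤ → A} (hx : x ∈ X) : shiftZ t x ∈ X := by
  induction t using Int.induction_on with
  | zero =>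
      have h : shiftZ 0 x = x := funext fun i => congrArg x (by ring)
      rwa [h]
  | succ n ih =>
      have h : shiftMap (shiftZ n x) = shiftZ ((n : ℤ) + 1) x :=
        funext fun i => congrArg x (by ring)
      rw [← h]
      exact (hX.2 _).mp ih
  | pred n ih =>
      have h : shiftMap (shiftZ (-(n : ℤ) - 1) x) = shiftZ (-(n : ℤ)) x :=
        funext fun i => congrArg x (by ring)
      exact (hX.2 _).mpr (by rw [h]; exact ih)

/-- Property (D) relocated to an arbitrary position `p` (the role of `0` in `PropertyD`). -/
lemma propD_at {A : Type*} [TopologicalSpace A] {X : Set (ℤ → A)} (hX : IsSubshift X)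
    (hD : PropertyD X) (p : ℤ) :
    ∀ x ∈ X, ∀ m : ℕ, ∃ k : ℕ, m ≤ k ∧ ∃ y ∈ X,
      (∀ j : ℤ, p - (m : ℤ) < j → j ≤ p → y j = x j) ∧
      (∀ z ∈ X, (∀ j : ℤ, p - (k : ℤ) < j → j ≤ p → z j = y j) →
        ∃ z' ∈ X, (∀ i : ℤ, i ≤ p → z' i = z i) ∧ z' (p + 1) = x (p + 1)) := by
  intro x hx m
  obtain ⟨k, y₀, hy₀X, hmk, hagr, hcl⟩ := hD (shiftZ p x) (shiftZ_mem hX p hx) m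
  refine ⟨k, hmk, shiftZ (-p) y₀, shiftZ_mem hX (-p) hy₀X, ?_, ?_⟩
  · intro j h1 h2
    have e1 : shiftZ (-p) y₀ j = y₀ (j - p) := congrArg y₀ (by ring)
    have e2 : shiftZ p x (j - p) = x j := congrArg x (by ring)
    rw [e1, hagr (j - p) (by omega) (by omega), e2]
  · intro z hz hzagr
    have hz' : ∀ j : ℤ, -(k : ℤ) < j → j ≤ 0 → shiftZ p z j = y₀ j := by
      intro j h1 h2
      have e2 : shiftZ (-p) y₀ (j + p) = y₀ j := congrArg y₀ (by ring)
      calc shiftZ p z j = z (j + p) := rfl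
        _ = shiftZ (-p) y₀ (j + p) := hzagr (j + p) (by omega) (by omega)
        _ = y₀ j := e2
    obtain ⟨z₀', hz₀'X, hz₀'agr, hz₀'1⟩ := hcl (shiftZ p z) (shiftZ_mem hX p hz) hz'
    refine ⟨shiftZ (-p) z₀', shiftZ_mem hX (-p) hz₀'X, ?_, ?_⟩
    · intro i hi
      have e1 : shiftZ (-p) z₀' i = z₀' (i - p) := congrArg z₀' (by ring)
      have e2 : shiftZ p z (i - p) = z i := congrArg z (by ring)
      rw [e1, hz₀'agr (i - p) (by omega), e2]
    · have e1 : shiftZ (-p) z₀' (p + 1) = z₀' 1 := congrArg z₀' (by ring)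
      have e2 : shiftZ p x 1 = x (p + 1) := congrArg x (by ring)
      rw [e1, hz₀'1, e2]

/-- Iterated property (D): continuation by `n` prescribed symbols to the right of `p`. -/
lemma propD_iter {A : Type*} [TopologicalSpace A] {X : Set (ℤ → A)} (hX : IsSubshift X)
    (hD : PropertyD X) :
    ∀ n : ℕ, ∀ p : ℤ, ∀ x ∈ X, ∀ m : ℕ, ∃ k : ℕ, m ≤ k ∧ ∃ y ∈ X,
      (∀ j : ℤ, p - (m : ℤ) < j → j ≤ p → y j = x j) ∧
      (∀ z ∈ X, (∀ j : ℤ, p - (k : ℤ) < j → j ≤ p → z j = y j) →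
        ∃ z' ∈ X, (∀ i : ℤ, i ≤ p → z' i = z i) ∧
          (∀ j : ℤ, p < j → j ≤ p + (n : ℤ) → z' j = x j)) := by
  intro n
  induction n with
  | zero =>
      intro p x hx m
      exact ⟨m, le_rfl, x, hx, fun j h1 h2 => rfl,
        fun z hz hzagr => ⟨z, hz, fun i _ => rfl, fun j h1 h2 => by omega⟩⟩
  | succ n ih =>
      intro p x hx m
      obtain ⟨k₁, hk₁, y₁, hy₁X, hy₁agr, hcl₁⟩ := propD_at hX hD (p + n) x hx (m + n)
      obtain ⟨k₂, hk₂, y₂, hy₂X, hy₂agr, hcl₂⟩ := ih p y₁ hy₁X (k₁ - n)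
      refine ⟨k₂, by omega, y₂, hy₂X, ?_, ?_⟩
      · intro j h1 h2
        rw [hy₂agr j (by omega) h2]
        exact hy₁agr j (by omega) (by omega)
      · intro z hz hzagr
        obtain ⟨z', hz'X, hz'agr, hz'right⟩ := hcl₂ z hz hzagr
        have hz'y₁ : ∀ j : ℤ, (p + n) - (k₁ : ℤ) < j → j ≤ p + n → z' j = y₁ j := by
          intro j h1 h2
          rcases le_or_gt j p with h | h
          · rw [hz'agr j h, hzagr j (by omega) h]
            exact hy₂agr j (by omega) h
          · exact hz'right j h h2
        obtain ⟨z'', hz''X, hz''agr, hz''1⟩ := hcl₁ z' hz'X hz'y₁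
        refine ⟨z'', hz''X, ?_, ?_⟩
        · intro i hi
          rw [hz''agr i (by omega)]
          exact hz'agr i hi
        · intro j h1 h2
          rcases le_or_gt j (p + n) with h | h
          · rw [hz''agr j h, hz'right j h1 h]
            exact hy₁agr j (by omega) h
          · have hj : j = p + n + 1 := by omega
            rw [hj, hz''1]

lemma isOpen_Vpiece {A : Type*} [TopologicalSpace A] [DiscreteTopology A]
    (X : Set (ℤ → A)) (i : ℤ) : IsOpen (Vpiece X i) := by
  rw [isOpen_iff_mem_nhds]
  rintro x ⟨k, hk⟩
  have hCopen : IsOpen {w : ℤ → A | ∀ j ∈ Finset.Icc (i - (k : ℤ)) i, w j = x j} := by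
    have h : {w : ℤ → A | ∀ j ∈ Finset.Icc (i - (k : ℤ)) i, w j = x j}
        = ⋂ j ∈ Finset.Icc (i - (k : ℤ)) i, {w : ℤ → A | w j = x j} := by
      ext w; simp
    rw [h]
    refine isOpen_biInter_finset fun j _ => ?_
    have h : {w : ℤ → A | w j = x j} = (fun w : ℤ → A => w j) ⁻¹' {x j} := rfl
    rw [h]
    exact IsOpen.preimage (continuous_apply j) (isOpen_discrete ({x j} : Set A))
  refine Filter.mem_of_superset (hCopen.mem_nhds ?_) ?_
  · intro j _; rfl
  · intro w hw
    refine ⟨k, fun y hy hagr => ?_⟩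
    have hwx : ∀ j : ℤ, i - (k : ℤ) ≤ j → j ≤ i → w j = x j := by
      intro j h1 h2; exact hw j (Finset.mem_Icc.mpr ⟨h1, h2⟩)
    have hyx : ∀ j : ℤ, i - (k : ℤ) ≤ j → j < i → y j = x j := by
      intro j h1 h2; rw [hagr j h1 h2]; exact hwx j h1 (le_of_lt h2)
    obtain ⟨y', hy'X, hy'agr, hy'i⟩ := hk y hy hyx
    exact ⟨y', hy'X, hy'agr, by rw [hy'i, ← hwx i (by omega) le_rfl]⟩

/-- Around any point of an open set in the product space there is a symmetric cylinder. -/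
lemma exists_cylinder_subset {A : Type*} [TopologicalSpace A] {U : Set (ℤ → A)}
    (hU : IsOpen U) {x : ℤ → A} (hx : x ∈ U) :
    ∃ N : ℕ, ∀ w : ℤ → A, (∀ j : ℤ, j.natAbs ≤ N → w j = x j) → w ∈ U := by
  obtain ⟨I, u, hIu, hsub⟩ := isOpen_pi_iff.mp hU x hx
  refine ⟨I.sup (fun j => j.natAbs), fun w hw => hsub ?_⟩
  intro j hj
  rw [hw j (Finset.le_sup hj)]
  exact (hIu j hj).2

/-- A property (D) subshift has `E(X)` residual (a dense Gδ) in `X`. -/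
theorem ESet_residual {A : Type*} [Fintype A] [TopologicalSpace A] [DiscreteTopology A]
    (X : Set (ℤ → A)) (hX : IsSubshift X) (hD : PropertyD X) :
    Dense (Subtype.val ⁻¹' ESet X : Set X) ∧ IsGδ (Subtype.val ⁻¹' ESet X : Set X) := by
  haveI : CompactSpace (ℤ → A) := inferInstance
  haveI : CompactSpace X := isCompact_iff_compactSpace.mp hX.1.isCompact
  haveI : T2Space (ℤ → A) := inferInstance
  haveI : T2Space X := inferInstance
  haveI : LocallyCompactSpace X := WeaklyLocallyCompactSpace.locallyCompactSpace
  haveI : BaireSpace X := BaireSpace.of_t2Space_locallyCompactSpace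
  have hE : (Subtype.val ⁻¹' ESet X : Set X) = ⋂ i : ℤ, (Subtype.val ⁻¹' Vpiece X i : Set X) := by
    ext z
    simp only [ESet_eq, mem_preimage, mem_inter_iff, mem_iInter]
    exact and_iff_right z.2
  have hopen : ∀ i : ℤ, IsOpen (Subtype.val ⁻¹' Vpiece X i : Set X) := fun i =>
    (isOpen_Vpiece X i).preimage continuous_subtype_val
  have hdense : ∀ i : ℤ, Dense (Subtype.val ⁻¹' Vpiece X i : Set X) := by
    intro i
    rw [dense_iff_inter_open]
    rintro U hUopen ⟨⟨x, hxX⟩, hxU⟩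
    obtain ⟨U₀, hU₀open, rfl⟩ := isOpen_induced_iff.mp hUopen
    obtain ⟨N, hN⟩ := exists_cylinder_subset hU₀open hxU
    obtain ⟨k, hmk, y, hyX, hyagr, hcl⟩ :=
      propD_iter hX hD (N + 1 + i.natAbs) (i - 1) x hxX (N + 1 + i.natAbs)
    obtain ⟨x'', hx''X, h1, h2⟩ := hcl y hyX (fun j _ _ => rfl)
    have hxx : ∀ j : ℤ, j.natAbs ≤ N → x'' j = x j := by
      intro j hj
      rcases le_or_gt j (i - 1) with h | h
      · rw [h1 j h]
        exact hyagr j (by omega) h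
      · exact h2 j (by omega) (by omega)
    have hmem : x'' ∈ Vpiece X i := by
      refine ⟨k, fun y₀ hy₀X hagr => ?_⟩
      have hy₀y : ∀ j : ℤ, (i - 1) - (k : ℤ) < j → j ≤ i - 1 → y₀ j = y j := by
        intro j hj1 hj2
        rw [hagr j (by omega) (by omega)]
        exact h1 j hj2
      obtain ⟨y', hy'X, hy'agr, hy'right⟩ := hcl y₀ hy₀X hy₀y
      refine ⟨y', hy'X, fun j hji => hy'agr j (by omega), ?_⟩
      have e1 : y' i = x i := hy'right i (by omega) (by omega)
      have e2 : x'' i = x i := h2 i (by omega) (by omega)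
      rw [e1, e2]
    exact ⟨⟨x'', hx''X⟩, hN x'' hxx, hmem⟩
  constructor
  · rw [hE]; exact dense_iInter_of_isOpen hopen hdense
  · rw [hE]; exact IsGδ.iInter fun i => (hopen i).isGδ
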